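/- Let F be a field of characteristic 0, a ∈ F∖{0,1}, and b ∈ F. Then the element ⟨a;b] + ⟨1−a;−b] of ℤ[F[ε]₂] lies in the five-term subgroup R; i.e. the two-term relation ⟨a;b]₂ = −⟨1−a;−b]₂ holds in the tangent group TB₂(F). -/

import Mathlib

noncomputable section
open Polynomial

/-- The truncated polynomial ring `F[ε]_ν := F[ε]/(ε^ν)`; `ν = 2` gives the dual numbers. -/
abbrev TruncPoly (F : Type*) [CommRing F] (ν : ℕ) : Type _ := AdjoinRoot ((X : F[X]) ^ ν)

/-- `ε ∈ F[ε]_ν`. -/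
def tEps (F : Type*) [CommRing F] (ν : ℕ) : TruncPoly F ν := AdjoinRoot.root _

/-- The inclusion `F → F[ε]_ν`. -/
def tIncl (F : Type*) [CommRing F] (ν : ℕ) : F →+* TruncPoly F ν := AdjoinRoot.of _

/-- `ℤ[F[ε]₂]`, the free abelian group on the set `F[ε]₂`. -/
abbrev ZDual (F : Type*) [CommRing F] := FreeAbelianGroup (TruncPoly F 2)

/-- `⟨a;a'] := [a + a'ε] − [a] ∈ ℤ[F[ε]₂]`. -/
def bracket (F : Type*) [CommRing F] (a a' : F) : ZDual F :=
  FreeAbelianGroup.of (tIncl F 2 a + tIncl F 2 a' * tEps F 2)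
    - FreeAbelianGroup.of (tIncl F 2 a)

/-- The subgroup `R ⊆ ℤ[F[ε]₂]` generated by the five-term elements; the tangent group
`TB₂(F)` is the span of the `⟨a;a']` modulo `R`. -/
def fiveTermSubgroup (F : Type*) [Field F] : AddSubgroup (ZDual F) :=
  AddSubgroup.closure { z | ∃ a b a' b' : F, a ≠ 0 ∧ a ≠ 1 ∧ b ≠ 0 ∧ b ≠ 1 ∧ a ≠ b ∧
    z = bracket F a a' - bracket F b b'
        + bracket F (b / a) ((a * b' - a' * b) / a ^ 2)
        - bracket F ((1 - b) / (1 - a)) (((1 - b) * a' - (1 - a) * b') / (1 - a) ^ 2)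
        + bracket F (a * (1 - b) / (b * (1 - a)))
            ((b * (1 - b) * a' - a * (1 - a) * b') / (b * (1 - a)) ^ 2) }

lemma bracket_zero (F : Type*) [CommRing F] (u : F) : bracket F u 0 = 0 := by
  unfold bracket
  rw [map_zero, zero_mul, add_zero, sub_self]

def II (F : Type*) [Field F] (y y' : F) : ZDual F :=
  bracket F y y' + bracket F y⁻¹ (-(y' / y ^ 2))

lemma genT' (F : Type*) [Field F] (a b a' b' u s v t w r : F)
    (ha0 : a ≠ 0) (ha1 : a ≠ 1) (hb0 : b ≠ 0) (hb1 : b ≠ 1) (hab : a ≠ b)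
    (hu : u = b / a) (hs : s = (a * b' - a' * b) / a ^ 2)
    (hv : v = (1 - b) / (1 - a)) (ht : t = ((1 - b) * a' - (1 - a) * b') / (1 - a) ^ 2)
    (hw : w = a * (1 - b) / (b * (1 - a)))
    (hr : r = (b * (1 - b) * a' - a * (1 - a) * b') / (b * (1 - a)) ^ 2) :
    bracket F a a' - bracket F b b' + bracket F u s - bracket F v t + bracket F w r
      ∈ fiveTermSubgroup F := by
  subst hu hs hv ht hw hr
  exact AddSubgroup.subset_closure ⟨a, b, a', b', ha0, ha1, hb0, hb1, hab, rfl⟩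

lemma lemB (F : Type*) [Field F] [CharZero F] (s : F) :
    II F 2 s + II F 2 s ∈ fiveTermSubgroup F := by
  have g1 := genT' F (3/2) 3 (-(3*s/8)) 0 2 (s/2) 4 (3*s) 2 s
    (by norm_num) (by norm_num) (by norm_num) (by norm_num) (by norm_num)
    (by norm_num) (by ring) (by norm_num) (by ring) (by norm_num) (by ring)
  have g2 := genT' F (-(1/2)) (-2) (3*s/8) 0 4 (3*s) 2 (s/2) 2⁻¹ (-(s/2^2))
    (by norm_num) (by norm_num) (by norm_num) (by norm_num) (by norm_num)
    (by norm_num) (by ring) (by norm_num) (by ring) (by norm_num) (by ring)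
  have g3 := genT' F 3 (3/2) 0 (-(3*s/8)) 2⁻¹ (-(s/8)) 4⁻¹ (-(3*s/16)) 2⁻¹ (-(s/2^2))
    (by norm_num) (by norm_num) (by norm_num) (by norm_num) (by norm_num)
    (by norm_num) (by ring) (by norm_num) (by ring) (by norm_num) (by ring)
  have g4 := genT' F (-2) (-(1/2)) 0 (3*s/8) 4⁻¹ (-(3*s/16)) 2⁻¹ (-(s/8)) 2 s
    (by norm_num) (by norm_num) (by norm_num) (by norm_num) (by norm_num)
    (by norm_num) (by ring) (by norm_num) (by ring) (by norm_num) (by ring)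
  have key : II F 2 s + II F 2 s =
      (bracket F (3/2) (-(3*s/8)) - bracket F 3 0 + bracket F 2 (s/2)
        - bracket F 4 (3*s) + bracket F 2 s)
      + (bracket F (-(1/2)) (3*s/8) - bracket F (-2) 0 + bracket F 4 (3*s)
        - bracket F 2 (s/2) + bracket F 2⁻¹ (-(s/2^2)))
      + (bracket F 3 0 - bracket F (3/2) (-(3*s/8)) + bracket F 2⁻¹ (-(s/8))
        - bracket F 4⁻¹ (-(3*s/16)) + bracket F 2⁻¹ (-(s/2^2)))
      + (bracket F (-2) 0 - bracket F (-(1/2)) (3*s/8) + bracket F 4⁻¹ (-(3*s/16))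
        - bracket F 2⁻¹ (-(s/8)) + bracket F 2 s) := by
    unfold II
    abel
  rw [key]
  exact add_mem (add_mem (add_mem g1 g2) g3) g4

lemma lemC (F : Type*) [Field F] [CharZero F] (w : F) :
    II F 4 w ∈ fiveTermSubgroup F := by
  have g5 := genT' F (3/2) 3 (-(w/16)) (w/4) 2 (w/4) 4 w 2 (w/4)
    (by norm_num) (by norm_num) (by norm_num) (by norm_num) (by norm_num)
    (by norm_num) (by ring) (by norm_num) (by ring) (by norm_num) (by ring)
  have g6 := genT' F 3 (3/2) (w/4) (-(w/16)) 2⁻¹ (-(w/4/2^2)) 4⁻¹ (-(w/4^2)) 2⁻¹ (-(w/4/2^2))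
    (by norm_num) (by norm_num) (by norm_num) (by norm_num) (by norm_num)
    (by norm_num) (by ring) (by norm_num) (by ring) (by norm_num) (by ring)
  have hB := lemB F (w/4)
  have key : II F 4 w = (II F 2 (w/4) + II F 2 (w/4))
      - ((bracket F (3/2) (-(w/16)) - bracket F 3 (w/4) + bracket F 2 (w/4)
          - bracket F 4 w + bracket F 2 (w/4))
        + (bracket F 3 (w/4) - bracket F (3/2) (-(w/16)) + bracket F 2⁻¹ (-(w/4/2^2))
          - bracket F 4⁻¹ (-(w/4^2)) + bracket F 2⁻¹ (-(w/4/2^2)))) := by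
    unfold II
    abel
  rw [key]
  exact sub_mem hB (add_mem g5 g6)

lemma lemScale (F : Type*) [Field F] (a b a' : F)
    (ha0 : a ≠ 0) (ha1 : a ≠ 1) (hb0 : b ≠ 0) (hb1 : b ≠ 1) (hab : a ≠ b) :
    II F (a*(1-b)/(b*(1-a))) (a'*(a-b)/(b*(1-a)^2))
      - II F ((1-b)/(1-a)) (a'*(a-b)/(a*(1-a)^2)) ∈ fiveTermSubgroup F := by
  have ha1' : 1 - a ≠ 0 := sub_ne_zero.2 (Ne.symm ha1)
  have hb1' : 1 - b ≠ 0 := sub_ne_zero.2 (Ne.symm hb1)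
  have g7 := genT' F a b a' (a'*b/a) (b/a) 0
      ((1-b)/(1-a)) (a'*(a-b)/(a*(1-a)^2))
      (a*(1-b)/(b*(1-a))) (a'*(a-b)/(b*(1-a)^2))
    ha0 ha1 hb0 hb1 hab
    rfl (by field_simp; try ring) rfl (by field_simp; try ring) rfl (by field_simp; try ring)
  have g8 := genT' F b a (a'*b/a) a' (a/b) 0
      (((1-b)/(1-a))⁻¹) (-(a'*(a-b)/(a*(1-a)^2)/((1-b)/(1-a))^2))
      ((a*(1-b)/(b*(1-a)))⁻¹) (-(a'*(a-b)/(b*(1-a)^2)/(a*(1-b)/(b*(1-a)))^2))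
    hb0 hb1 ha0 ha1 (Ne.symm hab)
    rfl (by field_simp; try ring) (by field_simp; try ring) (by field_simp; try ring)
    (by field_simp; try ring) (by field_simp; try ring)
  have key : II F (a*(1-b)/(b*(1-a))) (a'*(a-b)/(b*(1-a)^2))
      - II F ((1-b)/(1-a)) (a'*(a-b)/(a*(1-a)^2))
      = (bracket F a a' - bracket F b (a'*b/a) + bracket F (b/a) 0
          - bracket F ((1-b)/(1-a)) (a'*(a-b)/(a*(1-a)^2))
          + bracket F (a*(1-b)/(b*(1-a))) (a'*(a-b)/(b*(1-a)^2)))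
        + (bracket F b (a'*b/a) - bracket F a a' + bracket F (a/b) 0
          - bracket F (((1-b)/(1-a))⁻¹) (-(a'*(a-b)/(a*(1-a)^2)/((1-b)/(1-a))^2))
          + bracket F ((a*(1-b)/(b*(1-a)))⁻¹)
              (-(a'*(a-b)/(b*(1-a)^2)/(a*(1-b)/(b*(1-a)))^2))) := by
    unfold II
    rw [bracket_zero F (b/a), bracket_zero F (a/b)]
    abel
  rw [key]
  exact add_mem g7 g8

lemma lemE (F : Type*) [Field F] [CharZero F] (y t : F)
    (hy0 : y ≠ 0) (hy1 : y ≠ 1) (hy4 : y ≠ 4) :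
    II F y t ∈ fiveTermSubgroup F := by
  have hy1' : y - 1 ≠ 0 := sub_ne_zero.2 hy1
  have hy4' : (4 : F) - y ≠ 0 := sub_ne_zero.2 (Ne.symm hy4)
  set a3 : F := 4*(y-1)/(3*y) with ha3def
  set b3 : F := (y-1)/3 with hb3def
  set al : F := 4*t*(4-y)/(9*y^2) with haldef
  have h1a : 1 - a3 = (4-y)/(3*y) := by rw [ha3def]; field_simp; ring
  have h1b : 1 - b3 = (4-y)/3 := by rw [hb3def]; field_simp; ring
  have hdiff : a3 - b3 = (y-1)*(4-y)/(3*y) := by rw [ha3def, hb3def]; field_simp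
  have ha30 : a3 ≠ 0 := by
    rw [ha3def]
    exact div_ne_zero (mul_ne_zero (by norm_num) hy1') (mul_ne_zero (by norm_num) hy0)
  have ha31 : a3 ≠ 1 := by
    intro h
    rw [← sub_eq_zero] at h
    rw [show a3 - 1 = -((4-y)/(3*y)) by rw [h1a.symm]; ring] at h
    rw [neg_eq_zero, _root_.div_eq_zero_iff] at h
    rcases h with h | h
    · exact hy4' h
    · exact mul_ne_zero (by norm_num) hy0 h
  have hb30 : b3 ≠ 0 := div_ne_zero hy1' (by norm_num)
  have hb31 : b3 ≠ 1 := by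
    intro h
    rw [← sub_eq_zero] at h
    rw [show b3 - 1 = -((4-y)/3) by rw [h1b.symm]; ring, neg_eq_zero, _root_.div_eq_zero_iff] at h
    rcases h with h | h
    · exact hy4' h
    · exact (by norm_num : (3:F) ≠ 0) h
  have hab3 : a3 ≠ b3 := by
    intro h
    rw [← sub_eq_zero, hdiff, _root_.div_eq_zero_iff] at h
    rcases h with h | h
    · exact mul_ne_zero hy1' hy4' h
    · exact mul_ne_zero (by norm_num) hy0 h
  have hS := lemScale F a3 b3 al ha30 ha31 hb30 hb31 hab3
  have q1 : a3*(1-b3)/(b3*(1-a3)) = 4 := by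
    rw [h1a, h1b, ha3def, hb3def]
    field_simp
  have hq2d : (y-1)/3 * ((4-y)/(3*y))^2 ≠ 0 :=
    mul_ne_zero (div_ne_zero hy1' (by norm_num))
      (pow_ne_zero _ (div_ne_zero hy4' (mul_ne_zero (by norm_num) hy0)))
  have q2 : al*(a3-b3)/(b3*(1-a3)^2) = 4*t/y := by
    rw [h1a, hdiff, hb3def, haldef, div_eq_iff hq2d]
    field_simp
    ring
  have q3 : (1-b3)/(1-a3) = y := by
    rw [h1a, h1b]
    field_simp
  have hq4d : 4*(y-1)/(3*y) * ((4-y)/(3*y))^2 ≠ 0 :=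
    mul_ne_zero (div_ne_zero (mul_ne_zero (by norm_num) hy1') (mul_ne_zero (by norm_num) hy0))
      (pow_ne_zero _ (div_ne_zero hy4' (mul_ne_zero (by norm_num) hy0)))
  have q4 : al*(a3-b3)/(a3*(1-a3)^2) = t := by
    rw [h1a, hdiff, ha3def, haldef, div_eq_iff hq4d]
    field_simp
    ring
  rw [q1, q2, q3, q4] at hS
  have key : II F y t = II F 4 (4*t/y) - (II F 4 (4*t/y) - II F y t) := by abel
  rw [key]
  exact sub_mem (lemC F (4*t/y)) hS

lemma lemA (F : Type*) [Field F] (a b p : F)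
    (ha0 : a ≠ 0) (ha1 : a ≠ 1) (hb0 : b ≠ 0) (hb1 : b ≠ 1) (hab : a ≠ b) :
    bracket F a p + bracket F (1-a) (-p)
      + II F (a*(1-b)/(b*(1-a))) ((1-b)*p/(b*(1-a)^2)) ∈ fiveTermSubgroup F := by
  have ha1' : 1 - a ≠ 0 := sub_ne_zero.2 (Ne.symm ha1)
  have hb1' : 1 - b ≠ 0 := sub_ne_zero.2 (Ne.symm hb1)
  have g1 := genT' F a b p 0 (b/a) (-(b*p/a^2)) ((1-b)/(1-a)) ((1-b)*p/(1-a)^2)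
      (a*(1-b)/(b*(1-a))) ((1-b)*p/(b*(1-a)^2))
    ha0 ha1 hb0 hb1 hab
    rfl (by ring) rfl (by ring) rfl (by field_simp; try ring)
  have g2 := genT' F (1-a) (1-b) (-p) 0 ((1-b)/(1-a)) ((1-b)*p/(1-a)^2)
      (b/a) (-(b*p/a^2))
      ((a*(1-b)/(b*(1-a)))⁻¹) (-((1-b)*p/(b*(1-a)^2)/(a*(1-b)/(b*(1-a)))^2))
    ha1' (by intro h; apply ha0; linear_combination -h)
    hb1' (by intro h; apply hb0; linear_combination -h)
    (by intro h; apply hab; linear_combination -h)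
    rfl (by ring)
    (by rw [sub_sub_cancel, sub_sub_cancel])
    (by rw [sub_sub_cancel, sub_sub_cancel]; ring)
    (by rw [sub_sub_cancel, sub_sub_cancel]; field_simp; try ring)
    (by rw [sub_sub_cancel, sub_sub_cancel]; field_simp; try ring)
  have key : bracket F a p + bracket F (1-a) (-p)
      + II F (a*(1-b)/(b*(1-a))) ((1-b)*p/(b*(1-a)^2))
      = (bracket F a p - bracket F b 0 + bracket F (b/a) (-(b*p/a^2))
          - bracket F ((1-b)/(1-a)) ((1-b)*p/(1-a)^2)
          + bracket F (a*(1-b)/(b*(1-a))) ((1-b)*p/(b*(1-a)^2)))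
        + (bracket F (1-a) (-p) - bracket F (1-b) 0
          + bracket F ((1-b)/(1-a)) ((1-b)*p/(1-a)^2)
          - bracket F (b/a) (-(b*p/a^2))
          + bracket F ((a*(1-b)/(b*(1-a)))⁻¹)
              (-((1-b)*p/(b*(1-a)^2)/(a*(1-b)/(b*(1-a)))^2))) := by
    unfold II
    rw [bracket_zero F b, bracket_zero F (1-b)]
    abel
  rw [key]
  exact add_mem g1 g2


/-- The two-term relation `⟨a;b]₂ = −⟨1−a;−b]₂` holds in `TB₂(F)`. -/
theorem two_term_relation (F : Type*) [Field F] [CharZero F]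
    (a : F) (ha0 : a ≠ 0) (ha1 : a ≠ 1) (b : F) :
    bracket F a b + bracket F (1 - a) (-b) ∈ fiveTermSubgroup F := by
  have ha1' : (1 : F) - a ≠ 0 := sub_ne_zero.2 (Ne.symm ha1)
  by_cases hc : a = 2 ∨ a = 8/7
  · -- use b₁ = 3
    have ha3 : a ≠ 3 := by rcases hc with h | h <;> rw [h] <;> norm_num
    have ha65 : a ≠ 6/5 := by rcases hc with h | h <;> rw [h] <;> norm_num
    have hA := lemA F a 3 b ha0 ha1 (by norm_num) (by norm_num) ha3
    have hx0 : a*(1-(3:F))/(3*(1-a)) ≠ 0 :=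
      div_ne_zero (mul_ne_zero ha0 (by norm_num)) (mul_ne_zero (by norm_num) ha1')
    have hx1 : a*(1-(3:F))/(3*(1-a)) ≠ 1 := by
      intro h
      rw [div_eq_one_iff_eq (mul_ne_zero (by norm_num) ha1')] at h
      exact ha3 (by linear_combination h)
    have hx4 : a*(1-(3:F))/(3*(1-a)) ≠ 4 := by
      intro h
      rw [div_eq_iff (mul_ne_zero (by norm_num) ha1')] at h
      exact ha65 (by linear_combination h/10)
    have hE := lemE F (a*(1-(3:F))/(3*(1-a))) ((1-(3:F))*b/(3*(1-a)^2)) hx0 hx1 hx4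
    have key : bracket F a b + bracket F (1 - a) (-b)
        = (bracket F a b + bracket F (1-a) (-b)
            + II F (a*(1-(3:F))/(3*(1-a))) ((1-(3:F))*b/(3*(1-a)^2)))
          - II F (a*(1-(3:F))/(3*(1-a))) ((1-(3:F))*b/(3*(1-a)^2)) := by abel
    rw [key]
    exact sub_mem hA hE
  · push_neg at hc
    obtain ⟨ha2, ha87⟩ := hc
    have hA := lemA F a 2 b ha0 ha1 (by norm_num) (by norm_num) ha2
    have hx0 : a*(1-(2:F))/(2*(1-a)) ≠ 0 :=
      div_ne_zero (mul_ne_zero ha0 (by norm_num)) (mul_ne_zero (by norm_num) ha1')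
    have hx1 : a*(1-(2:F))/(2*(1-a)) ≠ 1 := by
      intro h
      rw [div_eq_one_iff_eq (mul_ne_zero (by norm_num) ha1')] at h
      exact ha2 (by linear_combination h)
    have hx4 : a*(1-(2:F))/(2*(1-a)) ≠ 4 := by
      intro h
      rw [div_eq_iff (mul_ne_zero (by norm_num) ha1')] at h
      exact ha87 (by linear_combination h/7)
    have hE := lemE F (a*(1-(2:F))/(2*(1-a))) ((1-(2:F))*b/(2*(1-a)^2)) hx0 hx1 hx4
    have key : bracket F a b + bracket F (1 - a) (-b)
        = (bracket F a b + bracket F (1-a) (-b)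
            + II F (a*(1-(2:F))/(2*(1-a))) ((1-(2:F))*b/(2*(1-a)^2)))
          - II F (a*(1-(2:F))/(2*(1-a))) ((1-(2:F))*b/(2*(1-a)^2)) := by abel
    rw [key]
    exact sub_mem hA hE

end
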